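/- Let R ∈ ℝⁿ have nonincreasing coordinates (R₁ ≥ R₂ ≥ ⋯ ≥ R_n), let e ∈ ℝⁿ be arbitrary, and let σ be a permutation of {1,…,n}. Write R^σ for the vector with (R^σ)_i = R_{σ(i)}. Let p be an isotonic projection of R + e onto K_n and let q be an isotonic projection of R^σ + e onto K_n. Then p ⪰ q. -/

import Mathlib

noncomputable section

/-- The monotone (isotonic) cone of nonincreasing vectors in `ℝⁿ`. -/
def monoCone (n : ℕ) : Set (EuclideanSpace ℝ (Fin n)) :=
  {x | ∀ i j : Fin n, i ≤ j → x j ≤ x i}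

/-- `p` is an isotonic projection of `y` onto the monotone cone. -/
def IsIsoProj {n : ℕ} (y p : EuclideanSpace ℝ (Fin n)) : Prop :=
  p ∈ monoCone n ∧ ∀ w ∈ monoCone n, ‖y - p‖ ≤ ‖y - w‖

/-- The sum of the `k` largest entries of `x`. -/
def topKSum {n : ℕ} (x : Fin n → ℝ) (k : ℕ) : ℝ :=
  sSup ((fun S : Finset (Fin n) => ∑ i ∈ S, x i) '' {S | S.card = k})

/-- `a` majorizes `b`. -/
def Majorizes {n : ℕ} (a b : Fin n → ℝ) : Prop :=
  (∀ k, 1 ≤ k → k ≤ n → topKSum b k ≤ topKSum a k) ∧ ∑ i, a i = ∑ i, b i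

namespace IsoAux

variable {n : ℕ}

/-- Partial sums of the first `k` coordinates. -/
def csum (x : Fin n → ℝ) (k : ℕ) : ℝ := ∑ i : Fin n, if (i : ℕ) < k then x i else 0

lemma csum_zero (x : Fin n → ℝ) : csum x 0 = 0 := by simp [csum]

lemma csum_of_le (x : Fin n → ℝ) {k : ℕ} (h : n ≤ k) : csum x k = ∑ i, x i := by
  unfold csum
  refine Finset.sum_congr rfl fun i _ => ?_
  rw [if_pos (lt_of_lt_of_le i.isLt h)]

lemma csum_succ (x : Fin n → ℝ) {k : ℕ} (h : k < n) :
    csum x (k + 1) = csum x k + x ⟨k, h⟩ := by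
  unfold csum
  have : ∀ i : Fin n, (if (i : ℕ) < k + 1 then x i else 0) =
      (if (i : ℕ) < k then x i else 0) + (if i = ⟨k, h⟩ then x i else 0) := by
    intro i
    rcases lt_trichotomy (i : ℕ) k with hlt | heq | hgt
    · rw [if_pos (by omega), if_pos hlt, if_neg (by simp [Fin.ext_iff]; omega)]; ring
    · rw [if_pos (by omega), if_neg (by omega), if_pos (by simp [Fin.ext_iff, heq])]; ring
    · rw [if_neg (by omega), if_neg (by omega), if_neg (by simp [Fin.ext_iff]; omega)]; ring
  rw [Finset.sum_congr rfl fun i _ => this i, Finset.sum_add_distrib,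
    Finset.sum_ite_eq' Finset.univ (⟨k, h⟩ : Fin n) x, if_pos (Finset.mem_univ _)]

lemma csum_succ' (x : Fin n → ℝ) (k : ℕ) :
    csum x (k + 1) = csum x k + (if h : k < n then x ⟨k, h⟩ else 0) := by
  by_cases h : k < n
  · rw [csum_succ x h, dif_pos h]
  · rw [dif_neg h, csum_of_le x (by omega), csum_of_le x (by omega), add_zero]

lemma csum_sub (x y : Fin n → ℝ) (k : ℕ) :
    csum (fun i => x i - y i) k = csum x k - csum y k := by
  unfold csum
  rw [← Finset.sum_sub_distrib]
  refine Finset.sum_congr rfl fun i _ => ?_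
  split_ifs <;> ring

lemma csum_add (x y : Fin n → ℝ) (k : ℕ) :
    csum (fun i => x i + y i) k = csum x k + csum y k := by
  unfold csum
  rw [← Finset.sum_add_distrib]
  refine Finset.sum_congr rfl fun i _ => ?_
  split_ifs <;> ring

lemma csum_sub_le (x : Fin n → ℝ) {a b : ℕ} (hab : a ≤ b) (hbn : b ≤ n) {c : ℝ}
    (hc : ∀ (i : ℕ) (h : i < n), a ≤ i → i < b → x ⟨i, h⟩ ≤ c) :
    csum x b - csum x a ≤ ((b : ℝ) - a) * c := by
  induction b, hab using Nat.le_induction with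
  | base => simp
  | succ b hb ih =>
    have hbn' : b < n := by omega
    have h1 := ih (by omega) (fun i h hi hib => hc i h hi (by omega))
    have h2 : x ⟨b, hbn'⟩ ≤ c := hc b hbn' hb (by omega)
    rw [csum_succ x hbn']
    push_cast
    linarith

lemma le_csum_sub (x : Fin n → ℝ) {a b : ℕ} (hab : a ≤ b) (hbn : b ≤ n) {c : ℝ}
    (hc : ∀ (i : ℕ) (h : i < n), a ≤ i → i < b → c ≤ x ⟨i, h⟩) :
    ((b : ℝ) - a) * c ≤ csum x b - csum x a := by
  induction b, hab using Nat.le_induction with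
  | base => simp
  | succ b hb ih =>
    have hbn' : b < n := by omega
    have h1 := ih (by omega) (fun i h hi hib => hc i h hi (by omega))
    have h2 : c ≤ x ⟨b, hbn'⟩ := hc b hbn' hb (by omega)
    rw [csum_succ x hbn']
    push_cast
    linarith

lemma csum_sub_eq (x : Fin n → ℝ) {a b : ℕ} (hab : a ≤ b) (hbn : b ≤ n) {c : ℝ}
    (hc : ∀ (i : ℕ) (h : i < n), a ≤ i → i < b → x ⟨i, h⟩ = c) :
    csum x b - csum x a = ((b : ℝ) - a) * c :=
  le_antisymm (csum_sub_le x hab hbn fun i h hi hib => (hc i h hi hib).le)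
    (le_csum_sub x hab hbn fun i h hi hib => (hc i h hi hib).ge)

/-- Discrete concavity of the partial sums of an antitone sequence. -/
lemma csum_concave (x : Fin n → ℝ) (hx : ∀ i j : Fin n, i ≤ j → x j ≤ x i)
    {a k b : ℕ} (hak : a ≤ k) (hkb : k ≤ b) (hbn : b ≤ n) :
    ((b : ℝ) - k) * csum x a + ((k : ℝ) - a) * csum x b ≤ ((b : ℝ) - a) * csum x k := by
  rcases eq_or_lt_of_le hak with rfl | hak'
  · have : ((a : ℝ) - a) = 0 := by ring
    rw [this, zero_mul, add_zero]
  · rcases eq_or_lt_of_le hkb with rfl | hkb'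
    · have : ((k : ℝ) - k) = 0 := by ring
      rw [this, zero_mul, zero_add]
    · have hkn : k < n := by omega
      have hk1n : k - 1 < n := by omega
      have low : ((k : ℝ) - a) * x ⟨k - 1, hk1n⟩ ≤ csum x k - csum x a := by
        refine le_csum_sub x (le_of_lt hak') (by omega) fun i h hi hib => ?_
        exact hx ⟨i, h⟩ ⟨k - 1, hk1n⟩ (Fin.mk_le_mk.2 (by omega))
      have high : csum x b - csum x k ≤ ((b : ℝ) - k) * x ⟨k, hkn⟩ := by
        refine csum_sub_le x (le_of_lt hkb') hbn fun i h hi hib => ?_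
        exact hx ⟨k, hkn⟩ ⟨i, h⟩ (Fin.mk_le_mk.2 (by omega))
      have hcc : x ⟨k, hkn⟩ ≤ x ⟨k - 1, hk1n⟩ := hx _ _ (Fin.mk_le_mk.2 (by omega))
      have hbk : (0 : ℝ) ≤ (b : ℝ) - k := by
        have := (Nat.cast_le (α := ℝ)).2 hkb; linarith
      have hka : (0 : ℝ) ≤ (k : ℝ) - a := by
        have := (Nat.cast_le (α := ℝ)).2 hak; linarith
      nlinarith [mul_le_mul_of_nonneg_left low hbk, mul_le_mul_of_nonneg_left high hka,
        mul_le_mul_of_nonneg_left (mul_le_mul_of_nonneg_left hcc hbk) hka]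

lemma strictMono_le_apply {k : ℕ} (f : Fin k → Fin n) (hf : StrictMono f) (m : Fin k) :
    (m : ℕ) ≤ (f m : ℕ) := by
  obtain ⟨v, hv⟩ := m
  induction v with
  | zero => simp
  | succ v ih =>
    have hv' : v < k := by omega
    have h1 : f ⟨v, hv'⟩ < f ⟨v + 1, hv⟩ := hf (by rw [Fin.lt_def]; exact Nat.lt_succ_self v)
    have h2 := ih hv'
    rw [Fin.lt_def] at h1
    simp only [Fin.val_mk] at h2 ⊢
    omega

lemma csum_eq_sum_fin (x : Fin n → ℝ) {k : ℕ} (hk : k ≤ n) :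
    csum x k = ∑ m : Fin k, x (Fin.castLE hk m) := by
  induction k with
  | zero => simp [csum]
  | succ k ih =>
    have hkn : k < n := by omega
    rw [csum_succ x hkn, ih (by omega), Fin.sum_univ_castSucc]
    rfl

/-- For an antitone vector, the sum over any `S` is at most the sum of the first
`S.card` coordinates. -/
lemma sum_set_le (x : Fin n → ℝ) (hx : ∀ i j : Fin n, i ≤ j → x j ≤ x i)
    (S : Finset (Fin n)) : ∑ i ∈ S, x i ≤ csum x S.card := by
  set k := S.card with hkdef
  have hk : k ≤ n := by
    have := Finset.card_le_univ S
    simpa using this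
  have e := S.orderIsoOfFin (rfl : S.card = k)
  have h1 : ∑ i ∈ S, x i = ∑ m : Fin k, x (e m) := by
    rw [← Finset.sum_coe_sort S x]
    exact (Equiv.sum_comp e.toEquiv (fun s : S => x s)).symm
  rw [h1, csum_eq_sum_fin x hk]
  refine Finset.sum_le_sum fun m _ => ?_
  refine hx (Fin.castLE hk m) (e m) ?_
  have hsm : StrictMono (fun m : Fin k => ((e m : S) : Fin n)) := by
    intro i j hij
    exact Subtype.coe_lt_coe.2 (e.strictMono hij)
  have := strictMono_le_apply _ hsm m
  simp [Fin.le_def]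
  exact this

lemma csum_one {k : ℕ} (hk : k ≤ n) : csum (fun _ : Fin n => (1 : ℝ)) k = k := by
  induction k with
  | zero => simp [csum]
  | succ k ih =>
    rw [csum_succ _ (by omega : k < n), ih (by omega)]
    push_cast; ring

lemma card_filter_lt {k : ℕ} (hk : k ≤ n) :
    (Finset.univ.filter fun i : Fin n => (i : ℕ) < k).card = k := by
  have : ((Finset.univ.filter fun i : Fin n => (i : ℕ) < k).card : ℝ) =
      csum (fun _ : Fin n => (1 : ℝ)) k := by
    rw [Finset.card_filter]
    push_cast
    unfold csum
    refine Finset.sum_congr rfl fun i _ => ?_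
    split_ifs <;> simp
  rw [csum_one hk] at this
  exact_mod_cast this

/-- For an antitone vector, the top-`k` sum is the sum of the first `k` entries. -/
lemma topKSum_eq (x : Fin n → ℝ) (hx : ∀ i j : Fin n, i ≤ j → x j ≤ x i) {k : ℕ}
    (hk : k ≤ n) : topKSum x k = csum x k := by
  apply IsGreatest.csSup_eq
  constructor
  · refine ⟨Finset.univ.filter fun i : Fin n => (i : ℕ) < k, card_filter_lt hk, ?_⟩
    show ∑ i ∈ Finset.univ.filter (fun i : Fin n => (i : ℕ) < k), x i = csum x k
    rw [Finset.sum_filter]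
    rfl
  · rintro r ⟨S, hS, rfl⟩
    simp only [Set.mem_setOf_eq] at hS
    rw [← hS]
    exact sum_set_le x hx S

lemma abel' (V P : ℕ → ℝ) (m : ℕ) :
    ∑ k ∈ Finset.range m, (V (k + 1) - V k) * P k
      = V m * P m - V 0 * P 0 - ∑ k ∈ Finset.range m, V (k + 1) * (P (k + 1) - P k) := by
  induction m with
  | zero => simp
  | succ m ih => rw [Finset.sum_range_succ, Finset.sum_range_succ, ih]; ring

lemma monoCone_convex : Convex ℝ (monoCone n) := by
  intro x hx y hy s t hs ht _
  intro i j hij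
  have h1 := hx i j hij
  have h2 := hy i j hij
  have e1 : (s • x + t • y) j = s * x j + t * y j := rfl
  have e2 : (s • x + t • y) i = s * x i + t * y i := rfl
  rw [e1, e2]
  have := mul_le_mul_of_nonneg_left h1 hs
  have := mul_le_mul_of_nonneg_left h2 ht
  linarith

lemma zero_mem_monoCone : (0 : EuclideanSpace ℝ (Fin n)) ∈ monoCone n := by
  intro i j hij
  exact le_refl 0

lemma add_mem_monoCone {x y : EuclideanSpace ℝ (Fin n)} (hx : x ∈ monoCone n)
    (hy : y ∈ monoCone n) : x + y ∈ monoCone n := by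
  intro i j hij
  have e1 : (x + y) j = x j + y j := rfl
  have e2 : (x + y) i = x i + y i := rfl
  rw [e1, e2]
  exact add_le_add (hx i j hij) (hy i j hij)

lemma inner_eq_sum (v w : EuclideanSpace ℝ (Fin n)) :
    (inner ℝ v w : ℝ) = ∑ i, v i * w i := by
  rw [PiLp.inner_apply]
  refine Finset.sum_congr rfl fun i _ => ?_
  simp [RCLike.inner_apply, mul_comm]

lemma isoProj_inner (y p : EuclideanSpace ℝ (Fin n)) (hp : IsIsoProj y p) :
    (∀ w ∈ monoCone n, (inner ℝ (y - p) w : ℝ) ≤ 0) ∧ (inner ℝ (y - p) p : ℝ) = 0 := by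
  have hmem := hp.1
  haveI : Nonempty (monoCone n) := ⟨⟨0, zero_mem_monoCone⟩⟩
  have hbdd : BddBelow (Set.range fun w : monoCone n => ‖y - (w : EuclideanSpace ℝ (Fin n))‖) :=
    ⟨0, by rintro r ⟨w, rfl⟩; exact norm_nonneg _⟩
  have hmin : ‖y - p‖ = ⨅ w : monoCone n, ‖y - w‖ :=
    le_antisymm (le_ciInf fun w => hp.2 w w.2) (ciInf_le hbdd (⟨p, hmem⟩ : monoCone n))
  have hVI := (norm_eq_iInf_iff_real_inner_le_zero monoCone_convex hmem).1 hmin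
  have h0 : (inner ℝ (y - p) p : ℝ) ≥ 0 := by
    have := hVI 0 zero_mem_monoCone
    rw [zero_sub, inner_neg_right] at this
    linarith
  have h1 : (inner ℝ (y - p) p : ℝ) ≤ 0 := by
    have := hVI (p + p) (add_mem_monoCone hmem hmem)
    rwa [add_sub_cancel_right] at this
  have heq : (inner ℝ (y - p) p : ℝ) = 0 := le_antisymm h1 h0
  refine ⟨fun w hw => ?_, heq⟩
  have := hVI (w + p) (add_mem_monoCone hw hmem)
  rwa [add_sub_cancel_right] at this

/-- Main structural facts about an isotonic projection. -/
lemma isoProj_facts {y p : EuclideanSpace ℝ (Fin n)} (hp : IsIsoProj y p) :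
    (∀ k, csum (fun i => y i - p i) k ≤ 0) ∧ csum (fun i => y i - p i) n = 0 ∧
      (∀ k (hk : k + 1 < n), csum (fun i => y i - p i) (k + 1) = 0 ∨
        p ⟨k, by omega⟩ = p ⟨k + 1, hk⟩) := by
  obtain ⟨hVI, hslack⟩ := isoProj_inner y p hp
  set vf : Fin n → ℝ := fun i => y i - p i with hvf
  have hinner : ∀ w : EuclideanSpace ℝ (Fin n), (inner ℝ (y - p) w : ℝ) = ∑ i, vf i * w i := by
    intro w
    rw [inner_eq_sum]
    refine Finset.sum_congr rfl fun i _ => ?_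
    have : (y - p) i = y i - p i := rfl
    rw [this]
  -- partial sums nonpositive
  have hle : ∀ k, csum vf k ≤ 0 := by
    intro k
    have hg : (WithLp.toLp 2 (fun i : Fin n => if (i : ℕ) < k then (1 : ℝ) else 0) : EuclideanSpace ℝ (Fin n)) ∈ monoCone n := by
      intro i j hij
      rw [Fin.le_def] at hij
      show (if (j : ℕ) < k then (1 : ℝ) else 0) ≤ (if (i : ℕ) < k then (1 : ℝ) else 0)
      by_cases hj : (j : ℕ) < k
      · rw [if_pos hj, if_pos (by omega)]
      · rw [if_neg hj]
        split_ifs <;> norm_num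
    have := hVI _ hg
    rw [hinner] at this
    simp only [PiLp.toLp_apply] at this
    have e : ∑ i, vf i * (if (i : ℕ) < k then (1 : ℝ) else 0) = csum vf k := by
      unfold csum
      refine Finset.sum_congr rfl fun i _ => ?_
      split_ifs <;> ring
    rwa [e] at this
  have htot : csum vf n = 0 := by
    refine le_antisymm (hle n) ?_
    have hg : (WithLp.toLp 2 (fun _ : Fin n => (-1 : ℝ)) : EuclideanSpace ℝ (Fin n)) ∈ monoCone n := fun i j hij => le_refl _
    have := hVI _ hg
    rw [hinner] at this
    simp only [PiLp.toLp_apply] at this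
    rw [csum_of_le vf (le_refl n)]
    have e : ∑ i, vf i * (-1 : ℝ) = -∑ i, vf i := by
      rw [← Finset.sum_neg_distrib]
      exact Finset.sum_congr rfl fun i _ => by ring
    rw [e] at this
    linarith
  refine ⟨hle, htot, ?_⟩
  -- Abel summation / complementary slackness
  set pN : ℕ → ℝ := fun m => if h : m < n then p ⟨m, h⟩ else 0 with hpN
  set V : ℕ → ℝ := fun m => csum vf m with hV
  have hstep : ∀ m, V (m + 1) - V m = (if h : m < n then vf ⟨m, h⟩ else 0) := by
    intro m
    rw [hV]
    simp only []
    rw [csum_succ' vf m]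
    ring
  have habel := abel' V pN n
  have hlhs : ∑ k ∈ Finset.range n, (V (k + 1) - V k) * pN k = ∑ i : Fin n, vf i * p i := by
    rw [← Fin.sum_univ_eq_sum_range (fun m => (V (m + 1) - V m) * pN m)]
    refine Finset.sum_congr rfl fun i _ => ?_
    rw [hstep (i : ℕ), hpN]
    simp only [dif_pos i.isLt, Fin.eta]
  have hsl : ∑ i : Fin n, vf i * p i = 0 := by
    rw [← hinner p]; exact hslack
  have hV0 : V 0 = 0 := csum_zero vf
  have hVn : V n = 0 := htot
  have hpNn : pN n = 0 := by rw [hpN]; simp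
  have hsum0 : ∑ k ∈ Finset.range n, V (k + 1) * (pN (k + 1) - pN k) = 0 := by
    rw [hlhs, hsl, hVn, hpNn, hV0] at habel
    linarith [habel]
  have hterm : ∀ k ∈ Finset.range n, V (k + 1) * (pN (k + 1) - pN k) = 0 := by
    have hnn : ∀ k ∈ Finset.range n, 0 ≤ V (k + 1) * (pN (k + 1) - pN k) := by
      intro k hk
      have hkn : k < n := Finset.mem_range.1 hk
      by_cases hk1 : k + 1 < n
      · have ha : V (k + 1) ≤ 0 := hle (k + 1)
        have hb : pN (k + 1) - pN k ≤ 0 := by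
          rw [hpN]
          simp only [dif_pos hk1, dif_pos hkn]
          have := hp.1 ⟨k, hkn⟩ ⟨k + 1, hk1⟩ (Fin.mk_le_mk.2 (by omega))
          linarith
        nlinarith [mul_nonneg (neg_nonneg.2 ha) (neg_nonneg.2 hb)]
      · have : k + 1 = n := by omega
        rw [this, hVn, zero_mul]
    intro k hk
    exact (Finset.sum_eq_zero_iff_of_nonneg hnn).1 hsum0 k hk
  intro k hk1
  have hkn : k < n := by omega
  have := hterm k (Finset.mem_range.2 hkn)
  rcases mul_eq_zero.1 this with h | h
  · exact Or.inl h
  · right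
    rw [hpN] at h
    simp only [dif_pos hk1, dif_pos hkn] at h
    linarith [h]

/-- Summing a permutation of an antitone vector over an initial segment can only
decrease the partial sum. -/
lemma csum_perm_le (x : Fin n → ℝ) (hx : ∀ i j : Fin n, i ≤ j → x j ≤ x i)
    (σ : Equiv.Perm (Fin n)) {j : ℕ} (hj : j ≤ n) :
    csum (fun i => x (σ i)) j ≤ csum x j := by
  classical
  set A := Finset.univ.filter fun i : Fin n => (i : ℕ) < j with hA
  have h1 : csum (fun i => x (σ i)) j = ∑ i ∈ A, x (σ i) := by
    rw [hA, Finset.sum_filter]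
    rfl
  have h2 : ∑ i ∈ A, x (σ i) = ∑ i ∈ A.image σ, x i :=
    (Finset.sum_image fun a _ b _ h => σ.injective h).symm
  have h3 : (A.image σ).card = j := by
    rw [Finset.card_image_of_injective A σ.injective, hA, card_filter_lt hj]
  calc csum (fun i => x (σ i)) j = ∑ i ∈ A.image σ, x i := by rw [h1, h2]
    _ ≤ csum x (A.image σ).card := sum_set_le x hx _
    _ = csum x j := by rw [h3]

end IsoAux

open IsoAux in
/-- If `R` is nonincreasing, the isotonic projection of `R + e` majorizes the
isotonic projection of `R ∘ σ + e` for any permutation `σ` and any `e`. -/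
theorem isoProj_true_ranking_majorizes_permuted
    {n : ℕ} (R e : EuclideanSpace ℝ (Fin n))
    (hR : ∀ i j : Fin n, i ≤ j → R j ≤ R i)
    (σ : Equiv.Perm (Fin n))
    (p q : EuclideanSpace ℝ (Fin n))
    (hp : IsIsoProj (R + e) p)
    (hq : IsIsoProj ((WithLp.toLp 2 (fun i => R (σ i) + e i) : EuclideanSpace ℝ (Fin n))) q) :
    Majorizes (p : Fin n → ℝ) (q : Fin n → ℝ) := by
  classical
  set yf : Fin n → ℝ := fun i => R i + e i with hyf
  set zf : Fin n → ℝ := fun i => R (σ i) + e i with hzf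
  obtain ⟨hple, hptot, hpslack⟩ := isoProj_facts hp
  obtain ⟨hqle, hqtot, hqslack⟩ := isoProj_facts hq
  -- restate the facts with explicit functions
  have hple' : ∀ k, csum (fun i => yf i - (p : Fin n → ℝ) i) k ≤ 0 := hple
  have hptot' : csum (fun i => yf i - (p : Fin n → ℝ) i) n = 0 := hptot
  have hqle' : ∀ k, csum (fun i => zf i - (q : Fin n → ℝ) i) k ≤ 0 := hqle
  have hqtot' : csum (fun i => zf i - (q : Fin n → ℝ) i) n = 0 := hqtot
  set wf : Fin n → ℝ := fun i => zf i - (q : Fin n → ℝ) i with hwf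
  -- basic comparisons of partial sums
  have hZY : ∀ j, j ≤ n → csum zf j ≤ csum yf j := by
    intro j hj
    have h1 : csum zf j = csum (fun i => R (σ i)) j + csum e j :=
      csum_add (fun i => R (σ i)) e j
    have h2 : csum yf j = csum R j + csum e j := csum_add R e j
    have h3 := csum_perm_le R hR σ hj
    rw [h1, h2]
    linarith
  have hYP : ∀ j, csum yf j ≤ csum (p : Fin n → ℝ) j := by
    intro j
    have := hple' j
    rw [csum_sub yf (p : Fin n → ℝ) j] at this
    linarith
  have hZQ : ∀ j, csum wf j = csum zf j - csum (q : Fin n → ℝ) j := by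
    intro j
    exact csum_sub zf (q : Fin n → ℝ) j
  have hQP : ∀ k, k ≤ n → csum (q : Fin n → ℝ) k ≤ csum (p : Fin n → ℝ) k := by
    intro k hkn
    -- choose the last touching point `a ≤ k` and the first touching point `b ≥ k`
    set A := (Finset.range (k + 1)).filter fun j => csum wf j = 0 with hA
    have hA0 : 0 ∈ A := by
      rw [hA]
      refine Finset.mem_filter.2 ⟨Finset.mem_range.2 (by omega), csum_zero wf⟩
    set a := A.max' ⟨0, hA0⟩ with ha
    have haA : a ∈ A := Finset.max'_mem A _
    have hak : a ≤ k := by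
      have := (Finset.mem_filter.1 haA).1
      rw [Finset.mem_range] at this
      omega
    have hWa : csum wf a = 0 := (Finset.mem_filter.1 haA).2
    set B := (Finset.Icc k n).filter fun j => csum wf j = 0 with hB
    have hBn : n ∈ B := by
      rw [hB]
      exact Finset.mem_filter.2 ⟨Finset.mem_Icc.2 ⟨hkn, le_refl n⟩, hqtot'⟩
    set b := B.min' ⟨n, hBn⟩ with hb
    have hbB : b ∈ B := Finset.min'_mem B _
    have hkb : k ≤ b := (Finset.mem_Icc.1 (Finset.mem_filter.1 hbB).1).1
    have hbn : b ≤ n := (Finset.mem_Icc.1 (Finset.mem_filter.1 hbB).1).2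
    have hWb : csum wf b = 0 := (Finset.mem_filter.1 hbB).2
    have hbetween : ∀ j, a < j → j < b → csum wf j ≠ 0 := by
      intro j hj1 hj2 h0
      rcases le_or_gt j k with hjk | hjk
      · have hjA : j ∈ A := Finset.mem_filter.2 ⟨Finset.mem_range.2 (by omega), h0⟩
        have := Finset.le_max' A j hjA
        omega
      · have hjB : j ∈ B := Finset.mem_filter.2 ⟨Finset.mem_Icc.2 ⟨by omega, by omega⟩, h0⟩
        have := Finset.min'_le B j hjB
        omega
    have hQaPa : csum (q : Fin n → ℝ) a ≤ csum (p : Fin n → ℝ) a := by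
      have := hZQ a
      rw [hWa] at this
      have h2 := hZY a (by omega)
      have h3 := hYP a
      linarith
    have hQbPb : csum (q : Fin n → ℝ) b ≤ csum (p : Fin n → ℝ) b := by
      have := hZQ b
      rw [hWb] at this
      have h2 := hZY b hbn
      have h3 := hYP b
      linarith
    rcases eq_or_lt_of_le (le_trans hak hkb) with hab | hab
    · -- a = b forces a = k = b
      have hka : k = a := by omega
      rw [hka]
      exact hQaPa
    · -- a < b : q is constant on [a, b)
      have han : a < n := by omega
      have hconst : ∀ i, a ≤ i → ∀ (h : i < n), i < b →
          (q : Fin n → ℝ) ⟨i, h⟩ = (q : Fin n → ℝ) ⟨a, han⟩ := by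
        intro i hi
        induction i, hi using Nat.le_induction with
        | base => intro h _; rfl
        | succ i hi ih =>
          intro h hib
          have hin : i < n := by omega
          have hi1n : i + 1 < n := by omega
          have hW : csum wf (i + 1) ≠ 0 := hbetween (i + 1) (by omega) (by omega)
          rcases hqslack i hi1n with h0 | heq
          · exact absurd h0 hW
          · have := ih hin (by omega)
            rw [← this]
            exact heq.symm
      have hQk : csum (q : Fin n → ℝ) k - csum (q : Fin n → ℝ) a =
          ((k : ℝ) - a) * (q : Fin n → ℝ) ⟨a, han⟩ :=
        csum_sub_eq (q : Fin n → ℝ) hak hkn fun i h hi hib => hconst i hi h (by omega)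
      have hQb : csum (q : Fin n → ℝ) b - csum (q : Fin n → ℝ) a =
          ((b : ℝ) - a) * (q : Fin n → ℝ) ⟨a, han⟩ :=
        csum_sub_eq (q : Fin n → ℝ) (by omega) hbn fun i h hi hib => hconst i hi h hib
      have hconc := csum_concave (p : Fin n → ℝ) hp.1 hak hkb hbn
      have hbk : (0 : ℝ) ≤ (b : ℝ) - k := by
        have := (Nat.cast_le (α := ℝ)).2 hkb; linarith
      have hka' : (0 : ℝ) ≤ (k : ℝ) - a := by
        have := (Nat.cast_le (α := ℝ)).2 hak; linarith
      have hba : (0 : ℝ) < (b : ℝ) - a := by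
        have := (Nat.cast_lt (α := ℝ)).2 hab; linarith
      have key : ((b : ℝ) - a) * csum (q : Fin n → ℝ) k ≤
          ((b : ℝ) - a) * csum (p : Fin n → ℝ) k := by
        nlinarith [hconc, hQk, hQb,
          mul_nonneg hbk (sub_nonneg.2 hQaPa), mul_nonneg hka' (sub_nonneg.2 hQbPb)]
      exact le_of_mul_le_mul_left (by linarith [key]) hba
  constructor
  · intro k hk1 hkn
    rw [topKSum_eq (q : Fin n → ℝ) hq.1 hkn, topKSum_eq (p : Fin n → ℝ) hp.1 hkn]
    exact hQP k hkn
  · have h1 : ∑ i, yf i - ∑ i, (p : Fin n → ℝ) i = 0 := by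
      have := hptot'
      rw [csum_sub yf (p : Fin n → ℝ) n, csum_of_le yf (le_refl n),
        csum_of_le (p : Fin n → ℝ) (le_refl n)] at this
      exact this
    have h2 : ∑ i, zf i - ∑ i, (q : Fin n → ℝ) i = 0 := by
      have := hqtot'
      rw [csum_sub zf (q : Fin n → ℝ) n, csum_of_le zf (le_refl n),
        csum_of_le (q : Fin n → ℝ) (le_refl n)] at this
      exact this
    have h3 : ∑ i, yf i = ∑ i, zf i := by
      rw [hyf, hzf]
      rw [Finset.sum_add_distrib, Finset.sum_add_distrib]
      congr 1
      exact (Equiv.sum_comp σ R).symm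
    linarith
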